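/- Let α < 0 and let f : ℝ → ℝ be a nonnegative α-concave function with f ∈ L¹(ℝ). Define f* : ℝ → ℝ by f*(z) = sup_{x ∈ ℝ} min(f(x), f(x − z)) for z ≥ 0 and f*(z) = 0 for z < 0. Then: (i) f* is α-concave; (ii) for every s ≥ 0 the sets {z : f*(z) > s} and {z : f(z) > s} have the same Lebesgue measure, and consequently ∫_ℝ f* dz = ∫_ℝ f dz; (iii) Δ_α f*(z) ≥ Δ_α f(z) for every z ∈ ℝ. -/

import Mathlib

open MeasureTheory Set
open scoped ENNReal

/-- The `α`-mean (for `α < 0`) of two nonnegative reals: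
`M_α(a,b;t) = (t a^α + (1−t) b^α)^{1/α}` if `a, b > 0`, and `0` if `a = 0` or `b = 0`. -/
noncomputable def Malpha (α a b t : ℝ) : ℝ :=
  if 0 < a ∧ 0 < b then (t * a ^ α + (1 - t) * b ^ α) ^ (1 / α) else 0

/-- The `α`-mean on `[0,∞]`, extending `M_α` to infinite values
(`∞^α = 0` and `0^α = ∞` for `α < 0` are built into `ENNReal` rpow). -/
noncomputable def eMalpha (α : ℝ) (a b : ℝ≥0∞) (t : ℝ) : ℝ≥0∞ :=
  (ENNReal.ofReal t * a ^ α + ENNReal.ofReal (1 - t) * b ^ α) ^ (1 / α)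

/-- A nonnegative `f : ℝ → ℝ` is `α`-concave if
`f(t x + (1−t) y) ≥ M_α(f(x), f(y); t)` for all `x, y` and `t ∈ [0,1]`. -/
def AlphaConcave1 (α : ℝ) (f : ℝ → ℝ) : Prop :=
  ∀ x y : ℝ, ∀ t : ℝ, t ∈ Set.Icc (0 : ℝ) 1 →
    Malpha α (f x) (f y) t ≤ f (t * x + (1 - t) * y)

/-- The `α`-difference function of `f : ℝ → ℝ`:
`Δ_α f(z) = sup { M_α(f(x), f(−y); 1/2) : (x+y)/2 = z }`, valued in `[0,∞]`. -/
noncomputable def diffAlpha1 (α : ℝ) (f : ℝ → ℝ) (z : ℝ) : ℝ≥0∞ :=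
  sSup {r : ℝ≥0∞ | ∃ x y : ℝ, (x + y) / 2 = z ∧
    r = ENNReal.ofReal (Malpha α (f x) (f (-y)) (1 / 2))}

/-- The `α`-difference function of a `[0,∞]`-valued `g : ℝ → [0,∞]`. -/
noncomputable def ediffAlpha1 (α : ℝ) (g : ℝ → ℝ≥0∞) (z : ℝ) : ℝ≥0∞ :=
  sSup {r : ℝ≥0∞ | ∃ x y : ℝ, (x + y) / 2 = z ∧
    r = eMalpha α (g x) (g (-y)) (1 / 2)}

/-- The decreasing rearrangement `f*` of `f`:
`f*(z) = sup_x min(f(x), f(x − z))` for `z ≥ 0` and `f*(z) = 0` for `z < 0`,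
valued in `[0,∞]`. -/
noncomputable def fstar (f : ℝ → ℝ) (z : ℝ) : ℝ≥0∞ :=
  if 0 ≤ z then ⨆ x : ℝ, ENNReal.ofReal (min (f x) (f (x - z))) else 0

section Helpers

variable {α : ℝ}

lemma erpow_anti (hα : α < 0) {x y : ℝ≥0∞} (h : x ≤ y) : y ^ α ≤ x ^ α := by
  have h2 : x ^ (-α) ≤ y ^ (-α) := ENNReal.rpow_le_rpow h (by linarith)
  rw [← neg_neg α, ENNReal.rpow_neg x, ENNReal.rpow_neg y]
  exact ENNReal.inv_le_inv.2 h2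

lemma erpow_anti_strict (hα : α < 0) {x y : ℝ≥0∞} (h : x < y) : y ^ α < x ^ α := by
  have h2 : x ^ (-α) < y ^ (-α) := ENNReal.rpow_lt_rpow h (by linarith)
  rw [← neg_neg α, ENNReal.rpow_neg x, ENNReal.rpow_neg y]
  exact ENNReal.inv_lt_inv.2 h2

lemma erpow_cancel (hα : α ≠ 0) (x : ℝ≥0∞) : (x ^ α) ^ (1 / α) = x := by
  rw [← ENNReal.rpow_mul, mul_one_div_cancel hα, ENNReal.rpow_one]

lemma erpow_cancel' (hα : α ≠ 0) (x : ℝ≥0∞) : (x ^ (1 / α)) ^ α = x := by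
  rw [← ENNReal.rpow_mul, one_div, inv_mul_cancel₀ hα, ENNReal.rpow_one]

lemma erpow_ne_top (hα : α < 0) {u : ℝ≥0∞} (hu : 0 < u) : u ^ α ≠ ⊤ := by
  rw [Ne, ENNReal.rpow_eq_top_iff]
  rintro (⟨h, -⟩ | ⟨-, h⟩)
  · exact hu.ne' h
  · linarith

lemma base_pos (hα : α < 0) {a b t : ℝ} (ha : 0 < a) (hb : 0 < b)
    (ht : t ∈ Set.Icc (0:ℝ) 1) : 0 < t * a ^ α + (1 - t) * b ^ α := by
  obtain ⟨ht0, ht1⟩ := ht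
  have hma : 0 < a ^ α := Real.rpow_pos_of_pos ha α
  have hmb : 0 < b ^ α := Real.rpow_pos_of_pos hb α
  rcases le_total (a ^ α) (b ^ α) with h | h
  · nlinarith
  · nlinarith

lemma Malpha_ge_min (hα : α < 0) {a b t : ℝ} (ha : 0 < a) (hb : 0 < b)
    (ht : t ∈ Set.Icc (0:ℝ) 1) : min a b ≤ Malpha α a b t := by
  obtain ⟨ht0, ht1⟩ := ht
  unfold Malpha
  rw [if_pos ⟨ha, hb⟩]
  rcases le_total a b with h | h
  · rw [min_eq_left h]
    have hba : b ^ α ≤ a ^ α := Real.rpow_le_rpow_of_nonpos ha h hα.le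
    have hsum : t * a ^ α + (1 - t) * b ^ α ≤ a ^ α := by nlinarith
    calc a = (a ^ α) ^ (1 / α) := by
            rw [← Real.rpow_mul ha.le, mul_one_div_cancel hα.ne, Real.rpow_one]
      _ ≤ (t * a ^ α + (1 - t) * b ^ α) ^ (1 / α) :=
          Real.rpow_le_rpow_of_nonpos (base_pos hα ha hb ⟨ht0, ht1⟩) hsum
            (by simpa using (one_div_nonpos.2 hα.le))
  · rw [min_eq_right h]
    have hba : a ^ α ≤ b ^ α := Real.rpow_le_rpow_of_nonpos hb h hα.le
    have hsum : t * a ^ α + (1 - t) * b ^ α ≤ b ^ α := by nlinarith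
    calc b = (b ^ α) ^ (1 / α) := by
            rw [← Real.rpow_mul hb.le, mul_one_div_cancel hα.ne, Real.rpow_one]
      _ ≤ (t * a ^ α + (1 - t) * b ^ α) ^ (1 / α) :=
          Real.rpow_le_rpow_of_nonpos (base_pos hα ha hb ⟨ht0, ht1⟩) hsum
            (by simpa using (one_div_nonpos.2 hα.le))

lemma Malpha_lt_Malpha (hα : α < 0) {s₁ s₂ a b t : ℝ} (hs₁ : 0 < s₁) (hs₂ : 0 < s₂)
    (h₁ : s₁ < a) (h₂ : s₂ < b) (ht : t ∈ Set.Icc (0:ℝ) 1) :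
    Malpha α s₁ s₂ t < Malpha α a b t := by
  obtain ⟨ht0, ht1⟩ := ht
  have ha : 0 < a := hs₁.trans h₁
  have hb : 0 < b := hs₂.trans h₂
  unfold Malpha
  rw [if_pos ⟨hs₁, hs₂⟩, if_pos ⟨ha, hb⟩]
  have ha1 : a ^ α < s₁ ^ α := Real.rpow_lt_rpow_of_neg hs₁ h₁ hα
  have hb1 : b ^ α < s₂ ^ α := Real.rpow_lt_rpow_of_neg hs₂ h₂ hα
  have hsum : t * a ^ α + (1 - t) * b ^ α < t * s₁ ^ α + (1 - t) * s₂ ^ α := by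
    rcases eq_or_lt_of_le ht0 with h | h
    · rw [← h]; nlinarith
    · nlinarith
  exact Real.rpow_lt_rpow_of_neg (base_pos hα ha hb ⟨ht0, ht1⟩) hsum
    (by simpa using (one_div_neg.2 hα))

end Helpers

section Helpers2

variable {α : ℝ}

lemma fstar_gt_iff (f : ℝ → ℝ) {s z : ℝ} (hs : 0 ≤ s) :
    ENNReal.ofReal s < fstar f z ↔
      0 ≤ z ∧ ∃ a b : ℝ, s < f a ∧ s < f b ∧ a - b = z := by
  unfold fstar
  by_cases hz : 0 ≤ z
  · rw [if_pos hz]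
    simp only [lt_iSup_iff]
    constructor
    · rintro ⟨x, hx⟩
      have h := (ENNReal.ofReal_lt_ofReal_iff_of_nonneg hs).1 hx
      exact ⟨hz, x, x - z, (lt_min_iff.1 h).1, (lt_min_iff.1 h).2, by ring⟩
    · rintro ⟨-, a, b, h1, h2, hab⟩
      refine ⟨a, (ENNReal.ofReal_lt_ofReal_iff_of_nonneg hs).2 (lt_min_iff.2 ⟨h1, ?_⟩)⟩
      rwa [show a - z = b by linarith]
  · rw [if_neg hz]
    simp [hz]

lemma nonneg_of_fstar_pos {f : ℝ → ℝ} {z : ℝ} (h : 0 < fstar f z) : 0 ≤ z := by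
  by_contra hz
  unfold fstar at h
  rw [if_neg hz] at h
  exact lt_irrefl 0 h

lemma exists_rpow_approx (hα : α < 0) {u : ℝ≥0∞} (hu : 0 < u) {δ : ℝ≥0∞} (hδ : 0 < δ) :
    ∃ s : ℝ, 0 < s ∧ ENNReal.ofReal s < u ∧ (ENNReal.ofReal s) ^ α ≤ u ^ α + δ := by
  have hune : u ^ α ≠ ⊤ := erpow_ne_top hα hu
  have hmin_pos : (0:ℝ≥0∞) < min δ 1 / 2 :=
    ENNReal.div_pos (lt_min hδ zero_lt_one).ne' (by norm_num)
  have hmin_ne : min δ 1 / 2 ≠ ⊤ := by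
    refine ne_top_of_le_ne_top (by norm_num : (1:ℝ≥0∞) / 2 ≠ ⊤) ?_
    exact ENNReal.div_le_div_right (min_le_right _ _) 2
  set c := u ^ α + min δ 1 / 2 with hc
  have hc_lt : u ^ α < c := ENNReal.lt_add_right hune hmin_pos.ne'
  have hc_ne : c ≠ ⊤ := ENNReal.add_ne_top.2 ⟨hune, hmin_ne⟩
  have hc0 : c ≠ 0 := (lt_of_lt_of_le hmin_pos (le_add_self)).ne'
  set σ := c ^ (1 / α) with hσ
  have h1α : (1:ℝ)/α < 0 := one_div_neg.2 hα
  have hσ_ne : σ ≠ ⊤ := by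
    rw [hσ, Ne, ENNReal.rpow_eq_top_iff]
    rintro (⟨h, -⟩ | ⟨h, -⟩)
    · exact hc0 h
    · exact hc_ne h
  have hσ_pos : 0 < σ := by
    rw [hσ, pos_iff_ne_zero, Ne, ENNReal.rpow_eq_zero_iff]
    rintro (⟨-, h⟩ | ⟨h, -⟩)
    · linarith
    · exact hc_ne h
  refine ⟨σ.toReal, ENNReal.toReal_pos hσ_pos.ne' hσ_ne, ?_, ?_⟩
  · rw [ENNReal.ofReal_toReal hσ_ne]
    have := erpow_anti_strict h1α hc_lt
    rwa [erpow_cancel hα.ne u] at this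
  · rw [ENNReal.ofReal_toReal hσ_ne, hσ, erpow_cancel' hα.ne, hc]
    refine add_le_add le_rfl ?_
    exact le_trans (ENNReal.half_le_self) (min_le_left _ _)

lemma level_mem (hα : α < 0) {f : ℝ → ℝ} (hf : AlphaConcave1 α f) {s : ℝ} (hs : 0 ≤ s)
    {a b t : ℝ} (ha : s < f a) (hb : s < f b) (ht : t ∈ Set.Icc (0:ℝ) 1) :
    s < f (t * a + (1 - t) * b) :=
  lt_of_lt_of_le
    (lt_of_lt_of_le (lt_min ha hb)
      (Malpha_ge_min hα (lt_of_le_of_lt hs ha) (lt_of_le_of_lt hs hb) ht))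
    (hf a b t ht)

lemma level_ordConnected (hα : α < 0) {f : ℝ → ℝ} (hf : AlphaConcave1 α f) {s : ℝ}
    (hs : 0 ≤ s) : ({x : ℝ | s < f x}).OrdConnected := by
  refine convex_iff_ordConnected.1 ?_
  intro a ha b hb p q hp hq hpq
  have hmem : p ∈ Set.Icc (0:ℝ) 1 := ⟨hp, by linarith⟩
  have := level_mem hα hf hs ha hb hmem
  simpa [smul_eq_mul, show (1:ℝ) - p = q by linarith] using this

end Helpers2

section Helpers3

lemma vol_diff (A : Set ℝ) (hA : A.OrdConnected) :
    volume (Set.Ici (0:ℝ) ∩ {z : ℝ | ∃ a ∈ A, ∃ b ∈ A, a - b = z}) = volume A := by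
  rcases A.eq_empty_or_nonempty with rfl | ⟨a₀, ha₀⟩
  · simp
  have hne : A.Nonempty := ⟨a₀, ha₀⟩
  by_cases hub : BddAbove A
  · by_cases hlb : BddBelow A
    · set I := sInf A with hI
      set S := sSup A with hS
      have hIoo : Set.Ioo I S ⊆ A := by
        intro x hx
        obtain ⟨a, ha, hax⟩ := exists_lt_of_csInf_lt hne hx.1
        obtain ⟨b, hb, hxb⟩ := exists_lt_of_lt_csSup hne hx.2
        exact hA.out ha hb ⟨hax.le, hxb.le⟩
      have hIcc : A ⊆ Set.Icc I S := fun x hx => ⟨csInf_le hlb hx, le_csSup hub hx⟩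
      have hvolA : volume A = ENNReal.ofReal (S - I) := by
        have h1 := measure_mono (μ := (volume : Measure ℝ)) hIoo
        have h2 := measure_mono (μ := (volume : Measure ℝ)) hIcc
        rw [Real.volume_Ioo] at h1
        rw [Real.volume_Icc] at h2
        exact le_antisymm h2 h1
      have hB1 : Set.Ioo (0:ℝ) (S - I) ⊆
          Set.Ici (0:ℝ) ∩ {z : ℝ | ∃ a ∈ A, ∃ b ∈ A, a - b = z} := by
        intro z hz
        refine ⟨hz.1.le, ?_⟩
        obtain ⟨a, ha, hlt⟩ := exists_lt_of_lt_csSup hne (show I + z < S by linarith [hz.2])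
        have haS : a ≤ S := le_csSup hub ha
        refine ⟨a, ha, a - z, hIoo ⟨by linarith, by linarith [hz.1]⟩, by ring⟩
      have hB2 : Set.Ici (0:ℝ) ∩ {z : ℝ | ∃ a ∈ A, ∃ b ∈ A, a - b = z} ⊆
          Set.Icc (0:ℝ) (S - I) := by
        rintro z ⟨hz0, a, ha, b, hb, hab⟩
        obtain ⟨haI, haS⟩ := hIcc ha
        obtain ⟨hbI, hbS⟩ := hIcc hb
        exact ⟨hz0, by linarith⟩
      have h1 := measure_mono (μ := (volume : Measure ℝ)) hB1
      have h2 := measure_mono (μ := (volume : Measure ℝ)) hB2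
      rw [Real.volume_Ioo] at h1
      rw [Real.volume_Icc] at h2
      rw [sub_zero] at h1 h2
      rw [hvolA]
      exact le_antisymm h2 h1
    · -- not bounded below
      rw [not_bddBelow_iff] at hlb
      have hsubA : Set.Iio a₀ ⊆ A := by
        intro x hx
        obtain ⟨c, hc, hcx⟩ := hlb x
        exact hA.out hc ha₀ ⟨hcx.le, hx.le⟩
      have hvolA : volume A = ⊤ := by
        refine top_le_iff.1 ?_
        calc (⊤:ℝ≥0∞) = volume (Set.Iio a₀) := (Real.volume_Iio).symm
          _ ≤ volume A := measure_mono (μ := (volume : Measure ℝ)) hsubA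
      have hsubB : Set.Ici (0:ℝ) ⊆
          Set.Ici (0:ℝ) ∩ {z : ℝ | ∃ a ∈ A, ∃ b ∈ A, a - b = z} := by
        intro z hz
        refine ⟨hz, a₀, ha₀, a₀ - z, ?_, by ring⟩
        rcases eq_or_lt_of_le (Set.mem_Ici.1 hz) with h | h
        · rw [← h]; simpa using ha₀
        · exact hsubA (by simp [Set.mem_Iio]; linarith)
      have : (⊤:ℝ≥0∞) ≤ volume (Set.Ici (0:ℝ) ∩ {z : ℝ | ∃ a ∈ A, ∃ b ∈ A, a - b = z}) := by
        calc (⊤:ℝ≥0∞) = volume (Set.Ici (0:ℝ)) := (Real.volume_Ici).symm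
          _ ≤ _ := measure_mono (μ := (volume : Measure ℝ)) hsubB
      rw [hvolA, top_le_iff.1 this]
  · -- not bounded above
    rw [not_bddAbove_iff] at hub
    have hsubA : Set.Ioi a₀ ⊆ A := by
      intro x hx
      obtain ⟨c, hc, hcx⟩ := hub x
      exact hA.out ha₀ hc ⟨le_of_lt hx, hcx.le⟩
    have hvolA : volume A = ⊤ := by
      refine top_le_iff.1 ?_
      calc (⊤:ℝ≥0∞) = volume (Set.Ioi a₀) := (Real.volume_Ioi).symm
        _ ≤ volume A := measure_mono (μ := (volume : Measure ℝ)) hsubA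
    have hsubB : Set.Ici (0:ℝ) ⊆
        Set.Ici (0:ℝ) ∩ {z : ℝ | ∃ a ∈ A, ∃ b ∈ A, a - b = z} := by
      intro z hz
      refine ⟨hz, a₀ + z, ?_, a₀, ha₀, by ring⟩
      rcases eq_or_lt_of_le (Set.mem_Ici.1 hz) with h | h
      · rw [← h]; simpa using ha₀
      · exact hsubA (by simp [Set.mem_Ioi]; linarith)
    have : (⊤:ℝ≥0∞) ≤ volume (Set.Ici (0:ℝ) ∩ {z : ℝ | ∃ a ∈ A, ∃ b ∈ A, a - b = z}) := by
      calc (⊤:ℝ≥0∞) = volume (Set.Ici (0:ℝ)) := (Real.volume_Ici).symm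
        _ ≤ _ := measure_mono (μ := (volume : Measure ℝ)) hsubB
    rw [hvolA, top_le_iff.1 this]

end Helpers3

section Part1

variable {α : ℝ}

lemma fstar_concave (hα : α < 0) (f : ℝ → ℝ) (hf : AlphaConcave1 α f) :
    ∀ x y : ℝ, ∀ t : ℝ, t ∈ Set.Icc (0:ℝ) 1 →
      eMalpha α (fstar f x) (fstar f y) t ≤ fstar f (t * x + (1 - t) * y) := by
  intro x y t ht
  obtain ⟨ht0, ht1⟩ := ht
  have h1α : (1:ℝ)/α < 0 := one_div_neg.2 hα
  rcases eq_or_lt_of_le ht0 with h0 | h0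
  · -- t = 0
    rw [← h0]
    have : eMalpha α (fstar f x) (fstar f y) 0 = fstar f y := by
      unfold eMalpha
      rw [ENNReal.ofReal_zero, zero_mul, zero_add, sub_zero, ENNReal.ofReal_one, one_mul,
        erpow_cancel hα.ne]
    rw [this, show (0:ℝ) * x + (1 - 0) * y = y by ring]
  rcases eq_or_lt_of_le ht1 with h1 | h1
  · -- t = 1
    rw [h1]
    have : eMalpha α (fstar f x) (fstar f y) 1 = fstar f x := by
      unfold eMalpha
      rw [sub_self, ENNReal.ofReal_zero, zero_mul, add_zero, ENNReal.ofReal_one, one_mul,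
        erpow_cancel hα.ne]
    rw [this, show (1:ℝ) * x + (1 - 1) * y = x by ring]
  -- 0 < t < 1
  have htpos : (0:ℝ≥0∞) < ENNReal.ofReal t := ENNReal.ofReal_pos.2 h0
  have htpos' : (0:ℝ≥0∞) < ENNReal.ofReal (1 - t) := ENNReal.ofReal_pos.2 (by linarith)
  rcases eq_or_lt_of_le ((zero_le : 0 ≤ fstar f x)) with ha | ha
  · -- fstar f x = 0
    unfold eMalpha
    rw [← ha, ENNReal.zero_rpow_of_neg hα, ENNReal.mul_top htpos.ne', top_add,
      ENNReal.top_rpow_of_neg h1α]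
    exact zero_le
  rcases eq_or_lt_of_le ((zero_le : 0 ≤ fstar f y)) with hb | hb
  · unfold eMalpha
    rw [← hb, ENNReal.zero_rpow_of_neg hα, ENNReal.mul_top htpos'.ne', add_top,
      ENNReal.top_rpow_of_neg h1α]
    exact zero_le
  have hx0 : 0 ≤ x := nonneg_of_fstar_pos ha
  have hy0 : 0 ≤ y := nonneg_of_fstar_pos hb
  apply ENNReal.le_of_forall_nnreal_lt
  intro r hr
  rcases eq_or_lt_of_le ((zero_le : 0 ≤ (r : ℝ≥0∞))) with hr0 | hr0
  · rw [← hr0]; exact zero_le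
  set T := ENNReal.ofReal t * (fstar f x) ^ α + ENNReal.ofReal (1 - t) * (fstar f y) ^ α
    with hT
  have hrne : (r:ℝ≥0∞) ≠ ⊤ := ENNReal.coe_ne_top
  have hrαne : (r:ℝ≥0∞) ^ α ≠ ⊤ := erpow_ne_top hα hr0
  have hrα0 : (0:ℝ≥0∞) < (r:ℝ≥0∞) ^ α := by
    rw [pos_iff_ne_zero, Ne, ENNReal.rpow_eq_zero_iff]
    rintro (⟨h, -⟩ | ⟨h, -⟩)
    · exact hr0.ne' h
    · exact hrne h
  have hTlt : T < (r:ℝ≥0∞) ^ α := by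
    by_contra h
    push_neg at h
    have h2 := erpow_anti h1α h
    rw [erpow_cancel hα.ne] at h2
    exact absurd hr (not_lt.2 h2)
  set ε := ((r:ℝ≥0∞) ^ α - T) / 2 with hε
  have hεpos : 0 < ε := ENNReal.div_pos (tsub_pos_of_lt hTlt).ne' (by norm_num)
  obtain ⟨s₁, hs₁pos, hs₁lt, hs₁α⟩ := exists_rpow_approx hα ha
    (ENNReal.div_pos hεpos.ne' ENNReal.ofReal_ne_top : 0 < ε / ENNReal.ofReal t)
  obtain ⟨s₂, hs₂pos, hs₂lt, hs₂α⟩ := exists_rpow_approx hα hb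
    (ENNReal.div_pos hεpos.ne' ENNReal.ofReal_ne_top : 0 < ε / ENNReal.ofReal (1 - t))
  -- the combined value bound
  have hbound : ENNReal.ofReal t * (ENNReal.ofReal s₁) ^ α +
      ENNReal.ofReal (1 - t) * (ENNReal.ofReal s₂) ^ α ≤ (r:ℝ≥0∞) ^ α := by
    have e1 : ENNReal.ofReal t * (ENNReal.ofReal s₁) ^ α ≤
        ENNReal.ofReal t * (fstar f x) ^ α + ε := by
      calc ENNReal.ofReal t * (ENNReal.ofReal s₁) ^ α
          ≤ ENNReal.ofReal t * ((fstar f x) ^ α + ε / ENNReal.ofReal t) :=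
            mul_le_mul_right hs₁α _
        _ = ENNReal.ofReal t * (fstar f x) ^ α + ε := by
            rw [mul_add, ENNReal.mul_div_cancel htpos.ne' ENNReal.ofReal_ne_top]
    have e2 : ENNReal.ofReal (1 - t) * (ENNReal.ofReal s₂) ^ α ≤
        ENNReal.ofReal (1 - t) * (fstar f y) ^ α + ε := by
      calc ENNReal.ofReal (1 - t) * (ENNReal.ofReal s₂) ^ α
          ≤ ENNReal.ofReal (1 - t) * ((fstar f y) ^ α + ε / ENNReal.ofReal (1 - t)) :=
            mul_le_mul_right hs₂α _
        _ = ENNReal.ofReal (1 - t) * (fstar f y) ^ α + ε := by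
            rw [mul_add, ENNReal.mul_div_cancel htpos'.ne' ENNReal.ofReal_ne_top]
    calc ENNReal.ofReal t * (ENNReal.ofReal s₁) ^ α +
        ENNReal.ofReal (1 - t) * (ENNReal.ofReal s₂) ^ α
        ≤ (ENNReal.ofReal t * (fstar f x) ^ α + ε) +
          (ENNReal.ofReal (1 - t) * (fstar f y) ^ α + ε) := add_le_add e1 e2
      _ = T + (ε + ε) := by rw [hT]; ring
      _ = T + ((r:ℝ≥0∞) ^ α - T) := by rw [hε, ENNReal.add_halves]
      _ = (r:ℝ≥0∞) ^ α := add_tsub_cancel_of_le hTlt.le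
  -- hence r ≤ ofReal (Malpha α s₁ s₂ t)
  have hMr : (r:ℝ≥0∞) ≤ ENNReal.ofReal (Malpha α s₁ s₂ t) := by
    have hbase : 0 < t * s₁ ^ α + (1 - t) * s₂ ^ α := base_pos hα hs₁pos hs₂pos ⟨ht0, ht1⟩
    have hM : ENNReal.ofReal (Malpha α s₁ s₂ t) =
        (ENNReal.ofReal t * (ENNReal.ofReal s₁) ^ α +
          ENNReal.ofReal (1 - t) * (ENNReal.ofReal s₂) ^ α) ^ (1/α) := by
      unfold Malpha
      rw [if_pos ⟨hs₁pos, hs₂pos⟩, ← ENNReal.ofReal_rpow_of_pos hbase]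
      rw [
        ENNReal.ofReal_add (mul_nonneg ht0 (Real.rpow_nonneg hs₁pos.le _))
          (mul_nonneg (by linarith) (Real.rpow_nonneg hs₂pos.le _)),
        ENNReal.ofReal_mul ht0, ENNReal.ofReal_mul (by linarith : (0:ℝ) ≤ 1 - t),
        ← ENNReal.ofReal_rpow_of_pos hs₁pos, ← ENNReal.ofReal_rpow_of_pos hs₂pos]
    rw [hM]
    have := erpow_anti h1α hbound
    rwa [erpow_cancel hα.ne] at this
  -- decompose x and y
  obtain ⟨-, a₁, b₁, ha₁, hb₁, hab₁⟩ := (fstar_gt_iff f hs₁pos.le).1 hs₁lt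
  obtain ⟨-, a₂, b₂, ha₂, hb₂, hab₂⟩ := (fstar_gt_iff f hs₂pos.le).1 hs₂lt
  have hm0 : 0 ≤ Malpha α s₁ s₂ t := by
    unfold Malpha
    rw [if_pos ⟨hs₁pos, hs₂pos⟩]
    exact Real.rpow_nonneg (base_pos hα hs₁pos hs₂pos ⟨ht0, ht1⟩).le _
  have hgoal : ENNReal.ofReal (Malpha α s₁ s₂ t) < fstar f (t * x + (1 - t) * y) := by
    refine (fstar_gt_iff f hm0).2 ⟨by nlinarith, t * a₁ + (1 - t) * a₂,
      t * b₁ + (1 - t) * b₂, ?_, ?_, by rw [← hab₁, ← hab₂]; ring⟩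
    · exact lt_of_lt_of_le (Malpha_lt_Malpha hα hs₁pos hs₂pos ha₁ ha₂ ⟨ht0, ht1⟩)
        (hf a₁ a₂ t ⟨ht0, ht1⟩)
    · exact lt_of_lt_of_le (Malpha_lt_Malpha hα hs₁pos hs₂pos hb₁ hb₂ ⟨ht0, ht1⟩)
        (hf b₁ b₂ t ⟨ht0, ht1⟩)
  exact le_trans hMr hgoal.le

end Part1

section Part3

variable {α : ℝ}

lemma Malpha_comm_half (α a b : ℝ) : Malpha α a b (1/2) = Malpha α b a (1/2) := by
  unfold Malpha
  by_cases h : 0 < a ∧ 0 < b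
  · rw [if_pos h, if_pos ⟨h.2, h.1⟩]
    congr 1
    ring
  · rw [if_neg h, if_neg (fun h' => h ⟨h'.2, h'.1⟩)]

lemma eMalpha_mono (hα : α < 0) {a b a' b' : ℝ≥0∞} (h1 : a ≤ a') (h2 : b ≤ b') (t : ℝ) :
    eMalpha α a b t ≤ eMalpha α a' b' t := by
  unfold eMalpha
  exact erpow_anti (one_div_neg.2 hα)
    (add_le_add (mul_le_mul_right (erpow_anti hα h1) _)
      (mul_le_mul_right (erpow_anti hα h2) _))

lemma ofReal_Malpha (hα : α < 0) {a b t : ℝ} (ha : 0 < a) (hb : 0 < b)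
    (ht0 : 0 ≤ t) (ht1 : t ≤ 1) :
    ENNReal.ofReal (Malpha α a b t) =
      eMalpha α (ENNReal.ofReal a) (ENNReal.ofReal b) t := by
  have hbase : 0 < t * a ^ α + (1 - t) * b ^ α := base_pos hα ha hb ⟨ht0, ht1⟩
  unfold Malpha eMalpha
  rw [if_pos ⟨ha, hb⟩, ← ENNReal.ofReal_rpow_of_pos hbase,
    ENNReal.ofReal_add (mul_nonneg ht0 (Real.rpow_nonneg ha.le _))
      (mul_nonneg (by linarith) (Real.rpow_nonneg hb.le _)),
    ENNReal.ofReal_mul ht0, ENNReal.ofReal_mul (by linarith : (0:ℝ) ≤ 1 - t),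
    ← ENNReal.ofReal_rpow_of_pos ha, ← ENNReal.ofReal_rpow_of_pos hb]

lemma diff_le (hα : α < 0) (f : ℝ → ℝ) (z : ℝ) :
    diffAlpha1 α f z ≤ ediffAlpha1 α (fstar f) z := by
  unfold diffAlpha1 ediffAlpha1
  apply sSup_le
  rintro r ⟨x, y, hxy, rfl⟩
  by_cases hpos : 0 < f x ∧ 0 < f (-y)
  swap
  · unfold Malpha
    rw [if_neg hpos, ENNReal.ofReal_zero]
    exact zero_le
  obtain ⟨hfx, hfy⟩ := hpos
  have h202 : (0:ℝ) ≤ 1/2 := by norm_num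
  have h212 : (1:ℝ)/2 ≤ 1 := by norm_num
  have hB1 : ENNReal.ofReal (f x) ≤ fstar f 0 := by
    unfold fstar
    rw [if_pos le_rfl]
    refine le_iSup_of_le x ?_
    simp
  have hB2 : ENNReal.ofReal (f (-y)) ≤ fstar f 0 := by
    unfold fstar
    rw [if_pos le_rfl]
    refine le_iSup_of_le (-y) ?_
    simp
  by_cases hz : 0 ≤ x + y
  · -- witness x' = x + y, y' = 0
    have hA : ENNReal.ofReal (min (f x) (f (-y))) ≤ fstar f (x + y) := by
      unfold fstar
      rw [if_pos hz]
      refine le_iSup_of_le x ?_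
      rw [show x - (x + y) = -y by ring]
    refine le_sSup_of_le (show eMalpha α (fstar f (x + y)) (fstar f (-0)) (1/2) ∈ _ from
      ⟨x + y, 0, by linarith, rfl⟩) ?_
    rw [neg_zero]
    rcases le_total (f x) (f (-y)) with h | h
    · rw [ofReal_Malpha hα hfx hfy h202 h212]
      refine eMalpha_mono hα ?_ hB2 _
      rwa [min_eq_left h] at hA
    · rw [Malpha_comm_half, ofReal_Malpha hα hfy hfx h202 h212]
      refine eMalpha_mono hα ?_ hB1 _
      rwa [min_eq_right h] at hA
  · -- witness x' = 0, y' = x + y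
    push_neg at hz
    have hA : ENNReal.ofReal (min (f x) (f (-y))) ≤ fstar f (-(x + y)) := by
      unfold fstar
      rw [if_pos (by linarith)]
      refine le_iSup_of_le (-y) ?_
      rw [show -y - -(x + y) = x by ring, min_comm]
    refine le_sSup_of_le (show eMalpha α (fstar f 0) (fstar f (-(x + y))) (1/2) ∈ _ from
      ⟨0, x + y, by linarith, rfl⟩) ?_
    rcases le_total (f x) (f (-y)) with h | h
    · rw [Malpha_comm_half, ofReal_Malpha hα hfy hfx h202 h212]
      refine eMalpha_mono hα hB2 ?_ _
      rwa [min_eq_left h] at hA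
    · rw [ofReal_Malpha hα hfx hfy h202 h212]
      refine eMalpha_mono hα hB1 ?_ _
      rwa [min_eq_right h] at hA

end Part3

section Part2

open scoped Pointwise

variable {α : ℝ}

lemma fstar_measurable (hα : α < 0) {f : ℝ → ℝ} (hf : AlphaConcave1 α f) :
    Measurable (fstar f) := by
  apply measurable_of_Ioi
  intro c
  rcases eq_or_ne c ⊤ with rfl | hc
  · convert MeasurableSet.empty
    ext z
    simp
  · have hc0 : (0:ℝ) ≤ c.toReal := ENNReal.toReal_nonneg
    have hset : fstar f ⁻¹' Set.Ioi c =
        Set.Ici (0:ℝ) ∩ ({x : ℝ | c.toReal < f x} - {x : ℝ | c.toReal < f x}) := by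
      ext z
      simp only [Set.mem_preimage, Set.mem_Ioi, Set.mem_inter_iff, Set.mem_Ici, Set.mem_sub]
      constructor
      · intro hlt
        obtain ⟨hz, a, b, h1, h2, hab⟩ := (fstar_gt_iff f hc0).1
          (by rwa [ENNReal.ofReal_toReal hc])
        exact ⟨hz, a, h1, b, h2, hab⟩
      · rintro ⟨hz, a, h1, b, h2, hab⟩
        have := (fstar_gt_iff f hc0).2 ⟨hz, a, b, h1, h2, hab⟩
        rwa [ENNReal.ofReal_toReal hc] at this
    rw [hset]
    have hconv : Convex ℝ {x : ℝ | c.toReal < f x} :=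
      convex_iff_ordConnected.2 (level_ordConnected hα hf hc0)
    exact measurableSet_Ici.inter
      (convex_iff_ordConnected.1 (hconv.sub hconv)).measurableSet

lemma lintegral_fstar (f : ℝ → ℝ) (hf0 : ∀ x, 0 ≤ f x) (hint : Integrable f)
    (hmeas : Measurable (fstar f))
    (heq : ∀ s : ℝ, 0 ≤ s →
      volume {z : ℝ | ENNReal.ofReal s < fstar f z} = volume {z : ℝ | s < f z}) :
    ∫⁻ z, fstar f z = ∫⁻ z, ENNReal.ofReal (f z) := by
  have key : ∀ n : ℕ, ∫⁻ z, min (fstar f z) n = ∫⁻ z, ENNReal.ofReal (min (f z) n) := by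
    intro n
    have hg : ∀ z, min (fstar f z) (n:ℝ≥0∞) ≠ ⊤ := fun z =>
      ne_top_of_le_ne_top (ENNReal.natCast_ne_top n) (min_le_right _ _)
    have hgm : Measurable fun z => (min (fstar f z) (n:ℝ≥0∞)).toReal :=
      (hmeas.min measurable_const).ennreal_toReal
    have hL : ∫⁻ z, min (fstar f z) (n:ℝ≥0∞) =
        ∫⁻ z, ENNReal.ofReal ((min (fstar f z) (n:ℝ≥0∞)).toReal) :=
      lintegral_congr fun z => (ENNReal.ofReal_toReal (hg z)).symm
    rw [hL, lintegral_eq_lintegral_meas_lt volume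
      (ae_of_all _ fun z => ENNReal.toReal_nonneg) hgm.aemeasurable]
    have hfm : AEMeasurable (fun z => min (f z) (n:ℝ)) volume :=
      hint.aemeasurable.min aemeasurable_const
    rw [lintegral_eq_lintegral_meas_lt volume
      (ae_of_all _ fun z => le_min (hf0 z) (Nat.cast_nonneg n)) hfm]
    refine setLIntegral_congr_fun measurableSet_Ioi (fun t ht => ?_)
    have ht0 : (0:ℝ) < t := ht
    by_cases htn : t < (n:ℝ)
    · have e1 : {z : ℝ | t < (min (fstar f z) (n:ℝ≥0∞)).toReal} =
          {z : ℝ | ENNReal.ofReal t < fstar f z} := by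
        ext z
        simp only [Set.mem_setOf_eq]
        rw [← ENNReal.ofReal_lt_iff_lt_toReal ht0.le (hg z), lt_min_iff,
          ← ENNReal.ofReal_natCast, ENNReal.ofReal_lt_ofReal_iff_of_nonneg ht0.le]
        exact ⟨fun h => h.1, fun h => ⟨h, htn⟩⟩
      have e2 : {z : ℝ | t < min (f z) (n:ℝ)} = {z : ℝ | t < f z} := by
        ext z
        simp only [Set.mem_setOf_eq, lt_min_iff]
        exact ⟨fun h => h.1, fun h => ⟨h, htn⟩⟩
      rw [e1, e2]
      exact heq t ht0.le
    · have e1 : {z : ℝ | t < (min (fstar f z) (n:ℝ≥0∞)).toReal} = ∅ := by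
        ext z
        simp only [Set.mem_setOf_eq, Set.mem_empty_iff_false, iff_false, not_lt]
        calc (min (fstar f z) (n:ℝ≥0∞)).toReal
            ≤ ((n:ℝ≥0∞)).toReal :=
              ENNReal.toReal_mono (ENNReal.natCast_ne_top n) (min_le_right _ _)
          _ = (n:ℝ) := by simp
          _ ≤ t := not_lt.1 htn
      have e2 : {z : ℝ | t < min (f z) (n:ℝ)} = ∅ := by
        ext z
        simp only [Set.mem_setOf_eq, Set.mem_empty_iff_false, iff_false, not_lt]
        exact le_trans (min_le_right _ _) (not_lt.1 htn)
      rw [e1, e2]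
  have hsup : ∀ x : ℝ≥0∞, ⨆ n : ℕ, min x n = x := by
    intro x
    refine le_antisymm (iSup_le fun n => min_le_left _ _) ?_
    rcases eq_or_ne x ⊤ with rfl | hx
    · calc (⊤:ℝ≥0∞) = ⨆ n:ℕ, (n:ℝ≥0∞) := ENNReal.iSup_natCast.symm
        _ ≤ ⨆ n:ℕ, min ⊤ (n:ℝ≥0∞) := iSup_mono fun n => by simp
    · obtain ⟨n, hn⟩ := ENNReal.exists_nat_gt hx
      exact le_iSup_of_le n (le_of_eq (min_eq_left hn.le).symm)
  calc ∫⁻ z, fstar f z = ∫⁻ z, ⨆ n : ℕ, min (fstar f z) n :=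
        lintegral_congr fun z => (hsup _).symm
    _ = ⨆ n : ℕ, ∫⁻ z, min (fstar f z) n :=
        lintegral_iSup (fun n => hmeas.min measurable_const)
          (fun m n hmn z => min_le_min le_rfl (Nat.cast_le.2 hmn))
    _ = ⨆ n : ℕ, ∫⁻ z, ENNReal.ofReal (min (f z) n) := by
        exact iSup_congr key
    _ = ∫⁻ z, ⨆ n : ℕ, ENNReal.ofReal (min (f z) n) := by
        refine (lintegral_iSup' (fun n => ENNReal.measurable_ofReal.comp_aemeasurable
          (hint.aemeasurable.min aemeasurable_const)) (ae_of_all _ fun z m n hmn => ?_)).symm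
        exact ENNReal.ofReal_le_ofReal (min_le_min le_rfl (Nat.cast_le.2 hmn))
    _ = ∫⁻ z, ENNReal.ofReal (f z) := by
        refine lintegral_congr fun z => ?_
        have : ∀ n : ℕ, ENNReal.ofReal (min (f z) n) = min (ENNReal.ofReal (f z)) n := by
          intro n
          rcases le_total (f z) (n:ℝ) with h | h
          · rw [min_eq_left h, min_eq_left]
            rw [← ENNReal.ofReal_natCast]
            exact ENNReal.ofReal_le_ofReal h
          · rw [min_eq_right h, min_eq_right, ENNReal.ofReal_natCast]
            rw [← ENNReal.ofReal_natCast]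
            exact ENNReal.ofReal_le_ofReal h
        simp_rw [this]
        exact hsup _

end Part2

/-- Properties of the rearrangement `f*` of a nonnegative `α`-concave `f ∈ L¹(ℝ)`
(`α < 0`): (i) `f*` is `α`-concave; (ii) `f*` and `f` are equimeasurable, and
consequently have equal integrals; (iii) `Δ_α f* ≥ Δ_α f` pointwise. -/
theorem fstar_properties (α : ℝ) (hα : α < 0) (f : ℝ → ℝ)
    (hf0 : ∀ x, 0 ≤ f x) (hf : AlphaConcave1 α f) (hint : Integrable f) :
    (∀ x y : ℝ, ∀ t : ℝ, t ∈ Set.Icc (0 : ℝ) 1 →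
        eMalpha α (fstar f x) (fstar f y) t ≤ fstar f (t * x + (1 - t) * y)) ∧
    (∀ s : ℝ, 0 ≤ s →
        volume {z : ℝ | ENNReal.ofReal s < fstar f z} =
          volume {z : ℝ | s < f z}) ∧
    (∫⁻ z, fstar f z = ∫⁻ z, ENNReal.ofReal (f z)) ∧
    (∀ z : ℝ, diffAlpha1 α f z ≤ ediffAlpha1 α (fstar f) z) := by
  have part1 := fstar_concave hα f hf
  have part2 : ∀ s : ℝ, 0 ≤ s →
      volume {z : ℝ | ENNReal.ofReal s < fstar f z} = volume {z : ℝ | s < f z} := by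
    intro s hs
    have hset : {z : ℝ | ENNReal.ofReal s < fstar f z} =
        Set.Ici (0:ℝ) ∩ {z : ℝ | ∃ a ∈ {x : ℝ | s < f x}, ∃ b ∈ {x : ℝ | s < f x},
          a - b = z} := by
      ext z
      rw [Set.mem_setOf_eq, fstar_gt_iff f hs]
      simp only [Set.mem_inter_iff, Set.mem_Ici, Set.mem_setOf_eq]
      constructor
      · rintro ⟨hz, a, b, h1, h2, hab⟩
        exact ⟨hz, a, h1, b, h2, hab⟩
      · rintro ⟨hz, a, h1, b, h2, hab⟩
        exact ⟨hz, a, b, h1, h2, hab⟩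
    rw [hset, vol_diff _ (level_ordConnected hα hf hs)]
  exact ⟨part1, part2,
    lintegral_fstar f hf0 hint (fstar_measurable hα hf) part2, diff_le hα f⟩
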